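/- There exists a constant c₁ ∈ (0,1], depending only on α and d, such that for all x, y ∈ ℤ^d with x ≠ y one has c₁ · ρ_x(|x−y|) ≤ ρ(x,y) ≤ c₁^{−1} · ρ_x(|x−y|). -/

import Mathlib

open scoped BigOperators

/-- ℓ∞ norm on ℤ^d, as a natural number. -/
def linf {d : ℕ} (x : Fin d → ℤ) : ℕ :=
  Finset.univ.sup fun i => (x i).natAbs

/-- ℓ¹ norm on ℤ^d, as a natural number. -/
def l1 {d : ℕ} (x : Fin d → ℤ) : ℕ :=
  ∑ i, (x i).natAbs

/-- `ν x = (max(|x|,1))^α`. -/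
noncomputable def nu (α : ℝ) {d : ℕ} (x : Fin d → ℤ) : ℝ :=
  ((max (linf x) 1 : ℕ) : ℝ) ^ α

/-- The conductance `μ x y = (max(|x|,|y|))^(-α)` if `|x-y|₁ = 1`, and `0` otherwise. -/
noncomputable def mu (α : ℝ) {d : ℕ} (x y : Fin d → ℤ) : ℝ :=
  if l1 (x - y) = 1 then ((max (linf x) (linf y) : ℕ) : ℝ) ^ (-α) else 0

/-- `z 0, …, z m` is a path: consecutive points are at ℓ¹-distance one. -/
def IsPath {d : ℕ} (z : ℕ → Fin d → ℤ) (m : ℕ) : Prop :=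
  ∀ i < m, l1 (z (i + 1) - z i) = 1

/-- The metric `ρ(x,y)`: `0` if `x = y`, otherwise the infimum of `∑ ν (z i)` over
paths from `x` to `y`. -/
noncomputable def rho (α : ℝ) {d : ℕ} (x y : Fin d → ℤ) : ℝ :=
  if x = y then 0
  else sInf {S : ℝ | ∃ (m : ℕ) (z : ℕ → Fin d → ℤ), IsPath z m ∧ z 0 = x ∧ z m = y ∧
    S = ∑ i ∈ Finset.range (m + 1), nu α (z i)}

/-- `ρ_x(r) = (max(|x|,r))^α · r`. -/
noncomputable def rhox (α : ℝ) {d : ℕ} (x : Fin d → ℤ) (r : ℝ) : ℝ :=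
  (max ((linf x : ℕ) : ℝ) r) ^ α * r

/-- `ρ_x⁻¹(r) = (max(|x|, r^{1/(1+α)}))^{-α} · r`, the inverse function of `ρ_x`. -/
noncomputable def rhoxInv (α : ℝ) {d : ℕ} (x : Fin d → ℤ) (r : ℝ) : ℝ :=
  (max ((linf x : ℕ) : ℝ) (r ^ (1 / (1 + α)))) ^ (-α) * r

/-- `V(x,r) = ν(B(x,r))`, the ν-volume of the ℓ∞-ball of radius `r` about `x`. -/
noncomputable def V (α : ℝ) {d : ℕ} (x : Fin d → ℤ) (r : ℝ) : ℝ :=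
  ∑' y : {y : Fin d → ℤ // ((linf (y - x) : ℕ) : ℝ) ≤ r}, nu α y.1

/-- `V_ρ(x,r) = ν(B_ρ(x,r))`, the ν-volume of the ρ-ball of radius `r` about `x`. -/
noncomputable def Vrho (α : ℝ) {d : ℕ} (x : Fin d → ℤ) (r : ℝ) : ℝ :=
  ∑' y : {y : Fin d → ℤ // rho α x y ≤ r}, nu α y.1

namespace RhoAux

variable {d : ℕ}

lemma coord_le_linf (x : Fin d → ℤ) (i : Fin d) : (x i).natAbs ≤ linf x := by
  exact Finset.le_sup (f := fun i => (x i).natAbs) (Finset.mem_univ i)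

lemma linf_le_iff {x : Fin d → ℤ} {k : ℕ} : linf x ≤ k ↔ ∀ i, (x i).natAbs ≤ k := by
  simp [linf, Finset.sup_le_iff]

lemma linf_sub_le_add (x y w : Fin d → ℤ) : linf (x - w) ≤ linf (x - y) + linf (y - w) := by
  rw [linf_le_iff]
  intro i
  have h1 := coord_le_linf (x - y) i
  have h2 := coord_le_linf (y - w) i
  simp only [Pi.sub_apply] at h1 h2 ⊢
  omega

lemma linf_sub_comm (x y : Fin d → ℤ) : linf (x - y) = linf (y - x) := by
  unfold linf
  congr 1
  funext i
  simp only [Pi.sub_apply]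
  omega

lemma linf_le_linf_sub_add (c x : Fin d → ℤ) : linf c ≤ linf (c - x) + linf x := by
  rw [linf_le_iff]
  intro i
  have h1 := coord_le_linf (c - x) i
  have h2 := coord_le_linf x i
  simp only [Pi.sub_apply] at h1
  omega

lemma linf_sub_le_add' (x y : Fin d → ℤ) : linf (x - y) ≤ linf x + linf y := by
  rw [linf_le_iff]
  intro i
  have h1 := coord_le_linf x i
  have h2 := coord_le_linf y i
  simp only [Pi.sub_apply]
  omega

lemma linf_le_l1 (x : Fin d → ℤ) : linf x ≤ l1 x := by
  unfold linf l1
  exact Finset.sup_le fun i _ =>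
    Finset.single_le_sum (f := fun j => (x j).natAbs) (fun j _ => Nat.zero_le _) (Finset.mem_univ i)

lemma l1_le_linf (x : Fin d → ℤ) : l1 x ≤ d * linf x := by
  have := Finset.sum_le_card_nsmul Finset.univ (fun i => (x i).natAbs) (linf x)
    (fun i _ => coord_le_linf x i)
  simpa [l1, mul_comm] using this

lemma one_le_maxcast (x : Fin d → ℤ) : (1:ℝ) ≤ ((max (linf x) 1 : ℕ) : ℝ) := by
  exact_mod_cast le_max_right (linf x) 1

lemma nu_pos (α : ℝ) (x : Fin d → ℤ) : 0 < nu α x :=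
  Real.rpow_pos_of_pos (lt_of_lt_of_le one_pos (one_le_maxcast x)) α

lemma le_nu_of_nonneg {α : ℝ} (hα : 0 ≤ α) {x : Fin d → ℤ} {b : ℝ} (hb : 0 ≤ b)
    (h : b ≤ ((max (linf x) 1 : ℕ) : ℝ)) : b ^ α ≤ nu α x :=
  Real.rpow_le_rpow hb h hα

lemma le_nu_of_nonpos {α : ℝ} (hα : α ≤ 0) {x : Fin d → ℤ} {b : ℝ}
    (h : ((max (linf x) 1 : ℕ) : ℝ) ≤ b) : b ^ α ≤ nu α x :=
  Real.rpow_le_rpow_of_nonpos (lt_of_lt_of_le one_pos (one_le_maxcast x)) h hα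

lemma nu_le_of_nonneg {α : ℝ} (hα : 0 ≤ α) {x : Fin d → ℤ} {b : ℝ}
    (h : ((max (linf x) 1 : ℕ) : ℝ) ≤ b) : nu α x ≤ b ^ α :=
  Real.rpow_le_rpow (by positivity) h hα

lemma nu_le_of_nonpos {α : ℝ} (hα : α ≤ 0) {x : Fin d → ℤ} {b : ℝ} (hb : 0 < b)
    (h : b ≤ ((max (linf x) 1 : ℕ) : ℝ)) : nu α x ≤ b ^ α :=
  Real.rpow_le_rpow_of_nonpos hb h hα

lemma nat_ivt {f : ℕ → ℕ} {m k : ℕ} (hstep : ∀ i < m, f (i+1) ≤ f i + 1)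
    (h0 : f 0 ≤ k) (hm : k ≤ f m) : ∃ i, i ≤ m ∧ f i = k := by
  induction m with
  | zero => exact ⟨0, le_refl 0, by omega⟩
  | succ m ih =>
    by_cases hk : k ≤ f m
    · obtain ⟨i, hi, hfi⟩ := ih (fun i hi => hstep i (by omega)) hk
      exact ⟨i, by omega, hfi⟩
    · have := hstep m (by omega)
      exact ⟨m+1, le_refl _, by omega⟩

lemma sum_nu_ge {α : ℝ} {z : ℕ → Fin d → ℤ} {m : ℕ} (hz : IsPath z m)
    {K : ℕ} (hK : K ≤ linf (z m - z 0)) {g : ℝ} (hg0 : 0 ≤ g)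
    (hg : ∀ c : Fin d → ℤ, linf (c - z 0) ≤ K → g ≤ nu α c) :
    ((K : ℝ) + 1) * g ≤ ∑ i ∈ Finset.range (m+1), nu α (z i) := by
  classical
  set f : ℕ → ℕ := fun i => linf (z i - z 0) with hf
  have hstep : ∀ i < m, f (i+1) ≤ f i + 1 := by
    intro i hi
    have h1 : linf (z (i+1) - z 0) ≤ linf (z (i+1) - z i) + linf (z i - z 0) :=
      linf_sub_le_add _ _ _
    have h2 : linf (z (i+1) - z i) ≤ l1 (z (i+1) - z i) := linf_le_l1 _
    rw [hz i hi] at h2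
    simp only [hf]
    omega
  have h0 : f 0 = 0 := by
    simp [hf, linf]
  have hexists : ∀ k : ℕ, ∃ i, k ≤ K → i ≤ m ∧ f i = k := by
    intro k
    by_cases hk : k ≤ K
    · obtain ⟨i, h1, h2⟩ := nat_ivt hstep (by omega) (le_trans hk hK)
      exact ⟨i, fun _ => ⟨h1, h2⟩⟩
    · exact ⟨0, fun h => absurd h hk⟩
  choose I hI using hexists
  have hIm : ∀ k ∈ Finset.range (K+1), I k ∈ Finset.range (m+1) := by
    intro k hk
    rw [Finset.mem_range] at hk ⊢
    have := (hI k (by omega)).1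
    omega
  have hIf : ∀ k, k ≤ K → f (I k) = k := fun k hk => (hI k hk).2
  have hinj : ∀ a ∈ Finset.range (K+1), ∀ b ∈ Finset.range (K+1), I a = I b → a = b := by
    intro a ha b hb hab
    rw [Finset.mem_range] at ha hb
    have h1 := hIf a (by omega)
    have h2 := hIf b (by omega)
    rw [hab] at h1
    omega
  calc ((K : ℝ) + 1) * g = ∑ _k ∈ Finset.range (K+1), g := by
        rw [Finset.sum_const, Finset.card_range, nsmul_eq_mul]
        push_cast
        ring
    _ ≤ ∑ k ∈ Finset.range (K+1), nu α (z (I k)) := by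
        refine Finset.sum_le_sum fun k hk => ?_
        rw [Finset.mem_range] at hk
        refine hg _ ?_
        have := hIf k (by omega)
        simp only [hf] at this
        omega
    _ = ∑ i ∈ (Finset.range (K+1)).image I, nu α (z i) := (Finset.sum_image (f := fun i => nu α (z i)) hinj).symm
    _ ≤ ∑ i ∈ Finset.range (m+1), nu α (z i) := by
        refine Finset.sum_le_sum_of_subset_of_nonneg ?_ (fun i _ _ => (nu_pos α _).le)
        intro i hi
        rw [Finset.mem_image] at hi
        obtain ⟨k, hk, rfl⟩ := hi
        exact hIm k hk

section Path

variable (x y : Fin d → ℤ)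

def nseq (j : ℕ) : ℕ := if h : j < d then (y ⟨j, h⟩ - x ⟨j, h⟩).natAbs else 0

def Nseq (k : ℕ) : ℕ := ∑ j ∈ Finset.range k, nseq x y j

def pathZ (t : ℕ) : Fin d → ℤ := fun i =>
  x i + (y i - x i).sign * (min (max ((t:ℤ) - (Nseq x y i.1 : ℤ)) 0) ((nseq x y i.1 : ℤ)))

variable {x y}

lemma nseq_coord (i : Fin d) : nseq x y i.1 = (y i - x i).natAbs := by
  simp [nseq, i.isLt]

lemma Nseq_succ (j : ℕ) : Nseq x y (j+1) = Nseq x y j + nseq x y j :=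
  Finset.sum_range_succ _ _

lemma Nseq_mono : Monotone (Nseq x y) := fun a b hab =>
  Finset.sum_le_sum_of_subset (Finset.range_subset_range.mpr hab)

lemma Nseq_d : Nseq x y d = l1 (y - x) := by
  unfold Nseq l1
  rw [← Fin.sum_univ_eq_sum_range (fun j => nseq x y j) d]
  refine Finset.sum_congr rfl fun i _ => ?_
  simp [nseq_coord, Pi.sub_apply]

lemma Nseq_add_le (i : Fin d) : Nseq x y i.1 + nseq x y i.1 ≤ Nseq x y d := by
  rw [← Nseq_succ]
  exact Nseq_mono i.isLt

lemma pathZ_zero : pathZ x y 0 = x := by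
  funext i
  have h1 : (0:ℤ) ≤ (Nseq x y i.1 : ℤ) := Int.ofNat_nonneg _
  have h2 : (0:ℤ) ≤ (nseq x y i.1 : ℤ) := Int.ofNat_nonneg _
  have : min (max ((0:ℕ) - (Nseq x y i.1 : ℤ)) 0) ((nseq x y i.1 : ℤ)) = 0 := by
    push_cast
    omega
  simp [pathZ, this]

lemma pathZ_last : pathZ x y (l1 (y - x)) = y := by
  funext i
  have h1 := Nseq_add_le (x := x) (y := y) i
  rw [Nseq_d] at h1
  have h2 : min (max ((l1 (y - x) : ℤ) - (Nseq x y i.1 : ℤ)) 0) ((nseq x y i.1 : ℤ))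
      = (nseq x y i.1 : ℤ) := by
    have c1 : ((Nseq x y i.1 : ℕ) : ℤ) + ((nseq x y i.1 : ℕ) : ℤ) ≤ (l1 (y - x) : ℤ) := by
      exact_mod_cast h1
    omega
  show x i + (y i - x i).sign * _ = y i
  rw [h2, nseq_coord, Int.sign_mul_natAbs]
  ring

lemma clamp_eq (A n t : ℤ) (hA : 0 ≤ A) (hn : 0 ≤ n) (ht : 0 ≤ t) :
    min (max (t - A) 0) n = min t (A + n) - min t A := by omega

lemma sum_clamp (t : ℕ) :
    (∑ i : Fin d, min (max ((t:ℤ) - (Nseq x y i.1 : ℤ)) 0) ((nseq x y i.1 : ℤ)))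
      = min (t:ℤ) ((Nseq x y d : ℕ) : ℤ) := by
  rw [Fin.sum_univ_eq_sum_range
    (fun j => min (max ((t:ℤ) - (Nseq x y j : ℤ)) 0) ((nseq x y j : ℤ))) d]
  have step : ∀ j ∈ Finset.range d,
      min (max ((t:ℤ) - (Nseq x y j : ℤ)) 0) ((nseq x y j : ℤ))
        = min (t:ℤ) ((Nseq x y (j+1) : ℕ) : ℤ) - min (t:ℤ) ((Nseq x y j : ℕ) : ℤ) := by
    intro j _
    rw [clamp_eq _ _ _ (Int.ofNat_nonneg _) (Int.ofNat_nonneg _) (Int.ofNat_nonneg _)]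
    congr 1
    rw [Nseq_succ]
    push_cast
    ring
  rw [Finset.sum_congr rfl step,
    Finset.sum_range_sub (fun j => min (t:ℤ) ((Nseq x y j : ℕ) : ℤ))]
  have : Nseq x y 0 = 0 := rfl
  rw [this]
  have ht : (0:ℤ) ≤ (t:ℤ) := Int.ofNat_nonneg _
  omega

lemma clamp_nonneg_le (t : ℕ) (i : Fin d) :
    0 ≤ min (max ((t:ℤ) - (Nseq x y i.1 : ℤ)) 0) ((nseq x y i.1 : ℤ)) ∧
    min (max ((t:ℤ) - (Nseq x y i.1 : ℤ)) 0) ((nseq x y i.1 : ℤ)) ≤ (nseq x y i.1 : ℤ) := by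
  have h2 : (0:ℤ) ≤ (nseq x y i.1 : ℤ) := Int.ofNat_nonneg _
  omega

lemma clamp_mono (t : ℕ) (i : Fin d) :
    min (max ((t:ℤ) - (Nseq x y i.1 : ℤ)) 0) ((nseq x y i.1 : ℤ)) ≤
    min (max (((t+1:ℕ):ℤ) - (Nseq x y i.1 : ℤ)) 0) ((nseq x y i.1 : ℤ)) := by
  push_cast
  omega

lemma pathZ_isPath : IsPath (pathZ x y) (l1 (y - x)) := by
  intro t ht
  set cl : ℕ → Fin d → ℤ :=
    fun s i => min (max ((s:ℤ) - (Nseq x y i.1 : ℤ)) 0) ((nseq x y i.1 : ℤ)) with hcl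
  have hδ : ∀ i : Fin d, 0 ≤ cl (t+1) i - cl t i := fun i => by
    have := clamp_mono (x := x) (y := y) t i
    simp only [hcl]
    omega
  have hpt : ∀ i : Fin d,
      (((pathZ x y (t+1) - pathZ x y t) i).natAbs : ℤ) = cl (t+1) i - cl t i := by
    intro i
    have hform : (pathZ x y (t+1) - pathZ x y t) i
        = (y i - x i).sign * (cl (t+1) i - cl t i) := by
      simp only [Pi.sub_apply, pathZ, hcl]
      ring
    by_cases h : y i - x i = 0
    · have hn : (nseq x y i.1 : ℤ) = 0 := by rw [nseq_coord, h]; rfl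
      have h1 : cl (t+1) i = 0 := by simp only [hcl]; omega
      have h2 : cl t i = 0 := by simp only [hcl]; omega
      rw [hform, h1, h2]
      simp
    · rw [hform, Int.natAbs_mul, Int.natAbs_sign, if_neg h, one_mul]
      exact Int.natAbs_of_nonneg (hδ i)
  have hkey : ((l1 (pathZ x y (t+1) - pathZ x y t) : ℕ) : ℤ) = 1 := by
    unfold l1
    rw [Nat.cast_sum, Finset.sum_congr rfl (fun i _ => hpt i), Finset.sum_sub_distrib]
    rw [sum_clamp (t+1), sum_clamp t]
    have hm : (t:ℤ) < ((Nseq x y d : ℕ) : ℤ) := by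
      rw [Nseq_d]; exact_mod_cast ht
    push_cast
    omega
  exact_mod_cast hkey

lemma coord_helper (a b c : ℤ) (h0 : 0 ≤ c) (h1 : c ≤ (b - a).natAbs) :
    (a + (b - a).sign * c).natAbs ≤ max a.natAbs b.natAbs ∧
    a.natAbs ≤ (a + (b - a).sign * c).natAbs + (b - a).natAbs := by
  rcases Int.lt_trichotomy (b - a) 0 with h | h | h
  · rw [Int.sign_eq_neg_one_of_neg h]
    omega
  · rw [h]
    simp only [Int.sign_zero]
    omega
  · rw [Int.sign_eq_one_of_pos h]
    omega

lemma pathZ_coord_bounds (t : ℕ) (i : Fin d) :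
    (pathZ x y t i).natAbs ≤ max (x i).natAbs (y i).natAbs ∧
    (x i).natAbs ≤ (pathZ x y t i).natAbs + (y i - x i).natAbs := by
  have hc := clamp_nonneg_le (x := x) (y := y) t i
  have := coord_helper (x i) (y i) (min (max ((t:ℤ) - (Nseq x y i.1 : ℤ)) 0) ((nseq x y i.1 : ℤ)))
    hc.1 (by rw [← nseq_coord]; exact_mod_cast hc.2)
  exact this

lemma linf_pathZ_le (t : ℕ) : linf (pathZ x y t) ≤ linf x + linf (y - x) := by
  rw [linf_le_iff]
  intro i
  have h1 := (pathZ_coord_bounds (x := x) (y := y) t i).1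
  have h2 := coord_le_linf x i
  have h3 := coord_le_linf (y - x) i
  simp only [Pi.sub_apply] at h3
  omega

lemma linf_le_pathZ (hd : 1 ≤ d) (t : ℕ) :
    linf x ≤ linf (pathZ x y t) + linf (y - x) := by
  obtain ⟨i₀, -, hsup⟩ := Finset.exists_mem_eq_sup Finset.univ
    (Finset.univ_nonempty_iff.mpr ⟨⟨0, by omega⟩⟩) (fun i => (x i).natAbs)
  have h1 := (pathZ_coord_bounds (x := x) (y := y) t i₀).2
  have h2 := coord_le_linf (pathZ x y t) i₀
  have h3 := coord_le_linf (y - x) i₀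
  simp only [Pi.sub_apply] at h3
  have : linf x = (x i₀).natAbs := hsup
  omega

lemma sum_range_Nseq (F : ℕ → ℝ) (k : ℕ) :
    ∑ t ∈ Finset.range (Nseq x y k), F t
      = ∑ j ∈ Finset.range k, ∑ t ∈ Finset.Ico (Nseq x y j) (Nseq x y (j+1)), F t := by
  induction k with
  | zero => simp [Nseq]
  | succ k ih =>
    rw [Finset.sum_range_succ, ← ih, Finset.range_eq_Ico, Finset.range_eq_Ico]
    exact (Finset.sum_Ico_consecutive F (Nat.zero_le (Nseq x y k)) (Nseq_mono (Nat.le_succ k))).symm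

lemma pathZ_leg (j : ℕ) (hj : j < d) (t : ℕ) (h1 : Nseq x y j ≤ t)
    (h2 : t < Nseq x y j + nseq x y j) :
    pathZ x y t ⟨j, hj⟩ = x ⟨j, hj⟩ + (y ⟨j, hj⟩ - x ⟨j, hj⟩).sign * ((t : ℤ) - Nseq x y j) := by
  show x ⟨j, hj⟩ + (y ⟨j, hj⟩ - x ⟨j, hj⟩).sign *
      (min (max ((t:ℤ) - (Nseq x y j : ℤ)) 0) ((nseq x y j : ℤ))) = _
  congr 1
  congr 1
  have c1 : ((Nseq x y j : ℕ) : ℤ) ≤ (t : ℤ) := by exact_mod_cast h1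
  have c2 : (t : ℤ) < ((Nseq x y j : ℕ) : ℤ) + ((nseq x y j : ℕ) : ℤ) := by exact_mod_cast h2
  omega

end Path

lemma two_sum {ε a : ℤ} (hε : ε = 1 ∨ ε = -1) {n S : ℕ}
    (hS : ∀ s : ℕ, s < n → (a + ε * (s:ℤ)).natAbs ≤ S) {g : ℕ → ℝ} (hg : ∀ u, 0 ≤ g u) :
    ∑ s ∈ Finset.range n, g ((a + ε * (s:ℤ)).natAbs) ≤ 2 * ∑ u ∈ Finset.range (S+1), g u := by
  classical
  set v : ℕ → ℤ := fun s => a + ε * (s:ℤ) with hv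
  have key : ∀ P : Finset ℕ, P ⊆ Finset.range n →
      (∀ s ∈ P, ∀ s' ∈ P, (v s).natAbs = (v s').natAbs → s = s') →
      ∑ s ∈ P, g ((v s).natAbs) ≤ ∑ u ∈ Finset.range (S+1), g u := by
    intro P hP hinj
    rw [← Finset.sum_image (f := g) hinj]
    refine Finset.sum_le_sum_of_subset_of_nonneg ?_ (fun u _ _ => hg u)
    intro u hu
    rw [Finset.mem_image] at hu
    obtain ⟨s, hs, rfl⟩ := hu
    rw [Finset.mem_range]
    have := hS s (Finset.mem_range.mp (hP hs))
    simp only [hv]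
    omega
  have h1 := key ((Finset.range n).filter (fun s => 0 ≤ v s)) (Finset.filter_subset _ _) ?inj1
  case inj1 =>
    intro s hs s' hs' hnat
    rw [Finset.mem_filter] at hs hs'
    have e1 : v s = v s' := by omega
    simp only [hv] at e1
    rcases hε with rfl | rfl <;> omega
  have h2 := key ((Finset.range n).filter (fun s => ¬ 0 ≤ v s)) (Finset.filter_subset _ _) ?inj2
  case inj2 =>
    intro s hs s' hs' hnat
    rw [Finset.mem_filter] at hs hs'
    have e1 : v s = v s' := by omega
    simp only [hv] at e1
    rcases hε with rfl | rfl <;> omega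
  have hsplit := Finset.sum_filter_add_sum_filter_not (Finset.range n) (fun s => 0 ≤ v s)
    (fun s => g ((v s).natAbs))
  simp only [hv] at hsplit h1 h2 ⊢
  linarith

lemma bernoulli_step {α : ℝ} (hα : -1 < α) (hα0 : α ≤ 0) {s : ℝ} (hs : 1 ≤ s) :
    (1 + α) * s ^ α ≤ s ^ (1 + α) - (s - 1) ^ (1 + α) := by
  have hp0 : (0:ℝ) < 1 + α := by linarith
  have hs0 : (0:ℝ) < s := by linarith
  have hds : (-1 : ℝ)/s = -(1/s) := by ring
  have hs1 : 1/s ≤ 1 := by rw [div_le_one hs0]; exact hs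
  have hs2 : 0 < 1/s := by positivity
  have key : (1 + (-1/s)) ^ (1+α) ≤ 1 + (1+α) * (-1/s) := by
    refine rpow_one_add_le_one_add_mul_self ?_ hp0.le (by linarith)
    rw [hds]
    linarith
  have hmul := mul_le_mul_of_nonneg_left key (Real.rpow_pos_of_pos hs0 (1+α)).le
  have e1 : s ^ (1+α) * (1 + (-1/s)) ^ (1+α) = (s - 1) ^ (1+α) := by
    rw [← Real.mul_rpow hs0.le (by rw [hds]; linarith)]
    congr 1
    field_simp
    ring
  have e3 : s ^ (1+α) = s ^ α * s := by
    rw [show (1:ℝ)+α = α + 1 by ring, Real.rpow_add_one hs0.ne']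
  have e2 : s ^ (1+α) * (1 + (1+α) * (-1/s)) = s ^ (1+α) - (1+α) * s ^ α := by
    rw [e3]
    field_simp
    ring
  rw [e1, e2] at hmul
  linarith

lemma harmonic_le {α : ℝ} (hα : -1 < α) (hα0 : α ≤ 0) (S : ℕ) :
    ∑ u ∈ Finset.range (S+1), ((max u 1 : ℕ) : ℝ) ^ α ≤ 2 + (S:ℝ) ^ (1+α) / (1+α) := by
  have hp0 : (0:ℝ) < 1 + α := by linarith
  induction S with
  | zero =>
    rw [Nat.cast_zero, Real.zero_rpow hp0.ne', Finset.sum_range_one]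
    have h1 : ((max 0 1 : ℕ) : ℝ) = 1 := by norm_num
    rw [h1, Real.one_rpow]
    norm_num
  | succ S ih =>
    rw [Finset.sum_range_succ]
    have hmax : ((max (S+1) 1 : ℕ) : ℝ) = (S:ℝ) + 1 := by
      rw [Nat.max_eq_left (by omega)]
      push_cast
      ring
    have key := bernoulli_step hα hα0 (s := (S:ℝ)+1) (by
      have : (0:ℝ) ≤ (S:ℝ) := Nat.cast_nonneg S
      linarith)
    have hsub : ((S:ℝ) + 1) - 1 = (S:ℝ) := by ring
    rw [hsub] at key
    have key' : ((S:ℝ)+1) ^ α ≤ (((S:ℝ)+1) ^ (1+α) - (S:ℝ) ^ (1+α)) / (1+α) := by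
      rw [le_div_iff₀ hp0]
      linarith
    rw [sub_div] at key'
    rw [hmax]
    push_cast
    push_cast at ih
    linarith

lemma leg_sum_le {α : ℝ} (hα : α ≤ 0) {x y : Fin d → ℤ} (j : ℕ) (hj : j < d) {S : ℕ}
    (hS : linf x + linf (y - x) ≤ S) :
    ∑ t ∈ Finset.Ico (Nseq x y j) (Nseq x y (j+1)), nu α (pathZ x y t)
      ≤ 2 * ∑ u ∈ Finset.range (S+1), ((max u 1 : ℕ) : ℝ) ^ α := by
  have hgnn : ∀ u : ℕ, (0:ℝ) ≤ ((max u 1 : ℕ) : ℝ) ^ α :=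
    fun u => Real.rpow_nonneg (Nat.cast_nonneg _) α
  have hRnn : (0:ℝ) ≤ ∑ u ∈ Finset.range (S+1), ((max u 1 : ℕ) : ℝ) ^ α :=
    Finset.sum_nonneg fun u _ => hgnn u
  by_cases hn : nseq x y j = 0
  · rw [Nseq_succ, hn]
    simp only [Nat.add_zero, Finset.Ico_self, Finset.sum_empty]
    linarith
  · have hi : ((⟨j, hj⟩ : Fin d) : ℕ) = j := rfl
    set i : Fin d := ⟨j, hj⟩ with hidef
    have hcoord : nseq x y j = (y i - x i).natAbs := nseq_coord i
    have hne : y i - x i ≠ 0 := fun h => hn (by rw [hcoord, h]; rfl)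
    have hε : (y i - x i).sign = 1 ∨ (y i - x i).sign = -1 := by
      rcases Int.lt_trichotomy (y i - x i) 0 with h | h | h
      · exact Or.inr (Int.sign_eq_neg_one_of_neg h)
      · exact absurd h hne
      · exact Or.inl (Int.sign_eq_one_of_pos h)
    have hval : ∀ s : ℕ, s < nseq x y j →
        pathZ x y (Nseq x y j + s) i = x i + (y i - x i).sign * (s:ℤ) := by
      intro s hs
      rw [pathZ_leg j hj _ (Nat.le_add_right _ _) (by omega)]
      congr 1
      congr 1
      push_cast
      ring
    have hbound : ∀ s : ℕ, s < nseq x y j →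
        (x i + (y i - x i).sign * (s:ℤ)).natAbs ≤ S := by
      intro s hs
      rw [← hval s hs]
      calc (pathZ x y (Nseq x y j + s) i).natAbs
          ≤ linf (pathZ x y (Nseq x y j + s)) := coord_le_linf _ i
        _ ≤ linf x + linf (y - x) := linf_pathZ_le _
        _ ≤ S := hS
    rw [Nseq_succ, Finset.sum_Ico_eq_sum_range, Nat.add_sub_cancel_left]
    have hterm : ∀ s ∈ Finset.range (nseq x y j),
        nu α (pathZ x y (Nseq x y j + s))
          ≤ ((max ((x i + (y i - x i).sign * (s:ℤ)).natAbs) 1 : ℕ) : ℝ) ^ α := by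
      intro s hs
      rw [Finset.mem_range] at hs
      refine nu_le_of_nonpos hα ?_ ?_
      · have h1 : (1:ℕ) ≤ max ((x i + (y i - x i).sign * (s:ℤ)).natAbs) 1 := le_max_right _ _
        exact_mod_cast Nat.lt_of_lt_of_le Nat.zero_lt_one h1
      · have h1 : (x i + (y i - x i).sign * (s:ℤ)).natAbs
            ≤ linf (pathZ x y (Nseq x y j + s)) := by
          rw [← hval s hs]
          exact coord_le_linf _ i
        have h2 : max ((x i + (y i - x i).sign * (s:ℤ)).natAbs) 1
            ≤ max (linf (pathZ x y (Nseq x y j + s))) 1 := by omega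
        exact_mod_cast h2
    calc ∑ s ∈ Finset.range (nseq x y j), nu α (pathZ x y (Nseq x y j + s))
        ≤ ∑ s ∈ Finset.range (nseq x y j),
            ((max ((x i + (y i - x i).sign * (s:ℤ)).natAbs) 1 : ℕ) : ℝ) ^ α :=
          Finset.sum_le_sum hterm
      _ ≤ 2 * ∑ u ∈ Finset.range (S+1), ((max u 1 : ℕ) : ℝ) ^ α :=
          two_sum (g := fun u => ((max u 1 : ℕ) : ℝ) ^ α) hε hbound hgnn

end RhoAux

set_option maxHeartbeats 2000000 in
open RhoAux in
/-- There is `c₁ ∈ (0,1]`, depending only on `α` and `d`, such that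
for all `x ≠ y` in `ℤ^d`, `c₁ ρ_x(|x-y|) ≤ ρ(x,y) ≤ c₁⁻¹ ρ_x(|x-y|)`. -/
theorem rho_comparable_rhox (d : ℕ) (hd : 1 ≤ d) (α : ℝ) (hα : -1 < α) :
    ∃ c₁ : ℝ, 0 < c₁ ∧ c₁ ≤ 1 ∧
      ∀ x y : Fin d → ℤ, x ≠ y →
        c₁ * rhox α x ((linf (x - y) : ℕ) : ℝ) ≤ rho α x y ∧
          rho α x y ≤ c₁⁻¹ * rhox α x ((linf (x - y) : ℕ) : ℝ) := by
  classical
  have hp0 : (0:ℝ) < 1 + α := by linarith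
  set clow : ℝ := min ((2:ℝ) ^ α) ((4:ℝ) ^ (-(1+α))) with hclow
  set Cup : ℝ := (2:ℝ)^(1+α) * d + (2:ℝ)^(1-α) * d * (5 + 6/(1+α)) with hCupdef
  have hd1 : (1:ℝ) ≤ (d:ℝ) := by exact_mod_cast hd
  have h2α : (0:ℝ) < (2:ℝ)^α := Real.rpow_pos_of_pos two_pos α
  have h4α : (0:ℝ) < (4:ℝ)^(-(1+α)) := Real.rpow_pos_of_pos (by norm_num) _
  have h2pa : (0:ℝ) < (2:ℝ)^(1+α) := Real.rpow_pos_of_pos two_pos _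
  have h2ma : (0:ℝ) < (2:ℝ)^(1-α) := Real.rpow_pos_of_pos two_pos _
  have h2na : (0:ℝ) < (2:ℝ)^(-α) := Real.rpow_pos_of_pos two_pos _
  have hfac : (1:ℝ) ≤ 5 + 6/(1+α) := by
    have : 0 < 6/(1+α) := by positivity
    linarith
  have hCup_pos : 0 < Cup := by
    rw [hCupdef]
    have h1 : 0 < (2:ℝ)^(1+α) * d := by positivity
    have h2 : 0 < (2:ℝ)^(1-α) * d * (5 + 6/(1+α)) := by
      apply mul_pos (by positivity)
      linarith
    linarith
  have hclow_pos : 0 < clow := lt_min h2α h4α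
  have hclow_le1 : clow ≤ 1 := by
    rcases le_or_gt α 0 with h | h
    · exact le_trans (min_le_left _ _) (Real.rpow_le_one_of_one_le_of_nonpos one_le_two h)
    · exact le_trans (min_le_right _ _)
        (Real.rpow_le_one_of_one_le_of_nonpos (by norm_num) (by linarith))
  refine ⟨min clow Cup⁻¹, lt_min hclow_pos (inv_pos.mpr hCup_pos),
    le_trans (min_le_left _ _) hclow_le1, ?_⟩
  intro x y hxy
  set r : ℕ := linf (x - y) with hrdef
  have hr1 : 1 ≤ r := by
    have hne : x - y ≠ 0 := sub_ne_zero.mpr hxy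
    by_contra h
    push_neg at h
    apply hne
    funext i
    have h1 := coord_le_linf (x - y) i
    rw [← hrdef] at h1
    have h2 : ((x - y) i).natAbs = 0 := by omega
    have := Int.natAbs_eq_zero.mp h2
    simpa using this
  have hyx : linf (y - x) = r := by
    rw [← linf_sub_comm x y, ← hrdef]
  set M : ℝ := max ((linf x : ℕ) : ℝ) ((r : ℕ) : ℝ) with hMdef
  have hrx : rhox α x ((r:ℕ) : ℝ) = M ^ α * (r:ℝ) := rfl
  have hr1R : (1:ℝ) ≤ (r:ℝ) := by exact_mod_cast hr1
  have hr0R : (0:ℝ) < (r:ℝ) := by linarith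
  have hMr : ((r:ℕ):ℝ) ≤ M := le_max_right _ _
  have hMx : ((linf x : ℕ):ℝ) ≤ M := le_max_left _ _
  have hM1 : (1:ℝ) ≤ M := le_trans hr1R hMr
  have hM0 : (0:ℝ) < M := lt_of_lt_of_le one_pos hM1
  have hMα : (0:ℝ) < M ^ α := Real.rpow_pos_of_pos hM0 α
  have hrhox_nn : (0:ℝ) ≤ M ^ α * (r:ℝ) := by positivity
  have hmem : (∑ t ∈ Finset.range (l1 (y - x) + 1), nu α (pathZ x y t)) ∈
      {S : ℝ | ∃ (m : ℕ) (z : ℕ → Fin d → ℤ), IsPath z m ∧ z 0 = x ∧ z m = y ∧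
        S = ∑ i ∈ Finset.range (m + 1), nu α (z i)} :=
    ⟨l1 (y - x), pathZ x y, pathZ_isPath, pathZ_zero, pathZ_last, rfl⟩
  have hbdd : BddBelow {S : ℝ | ∃ (m : ℕ) (z : ℕ → Fin d → ℤ), IsPath z m ∧ z 0 = x ∧ z m = y ∧
      S = ∑ i ∈ Finset.range (m + 1), nu α (z i)} := by
    refine ⟨0, fun S hS => ?_⟩
    obtain ⟨m, z, _, _, _, rfl⟩ := hS
    exact Finset.sum_nonneg fun i _ => (nu_pos α _).le
  constructor
  · -- LOWER BOUND
    have hmain : clow * (M ^ α * (r:ℝ)) ≤ rho α x y := by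
      rw [rho, if_neg hxy]
      refine le_csInf ⟨_, hmem⟩ ?_
      intro S hS
      obtain ⟨m, z, hz, hz0, hzm, rfl⟩ := hS
      rcases le_or_gt α 0 with hneg | hpos
      · -- α ≤ 0 : use points at all distances 0..r from x
        have hK : r ≤ linf (z m - z 0) := by
          rw [hz0, hzm, hyx]
        have h2M : (0:ℝ) < 2*M := by linarith
        have hgball : ∀ c : Fin d → ℤ, linf (c - z 0) ≤ r → (2*M)^α ≤ nu α c := by
          intro c hc
          refine le_nu_of_nonpos hneg ?_
          have h1 : linf c ≤ linf (c - z 0) + linf (z 0) := linf_le_linf_sub_add c (z 0)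
          rw [hz0] at h1 hc
          have h1' : linf c ≤ r + linf x := by omega
          have hcast : (linf c : ℝ) ≤ (r:ℝ) + ((linf x:ℕ):ℝ) := by exact_mod_cast h1'
          push_cast
          refine max_le (by linarith) (by linarith)
        have happ := sum_nu_ge hz hK (Real.rpow_nonneg h2M.le α) hgball
        have hsplit : (2*M)^α = 2^α * M^α := Real.mul_rpow two_pos.le hM0.le
        have hc1 : clow ≤ 2^α := min_le_left _ _
        have step1 : clow * (M^α * (r:ℝ)) ≤ 2^α * (M^α * (r:ℝ)) :=
          mul_le_mul_of_nonneg_right hc1 hrhox_nn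
        have step2 : 2^α * (M^α * (r:ℝ)) ≤ ((r:ℝ)+1) * ((2*M)^α) := by
          rw [hsplit]
          have hpr := mul_pos h2α hMα
          calc 2^α * (M^α * (r:ℝ)) = (2^α * M^α) * (r:ℝ) := by ring
            _ ≤ (2^α * M^α) * ((r:ℝ)+1) := mul_le_mul_of_nonneg_left (by linarith) hpr.le
            _ = ((r:ℝ)+1) * (2^α * M^α) := by ring
        linarith
      · -- 0 < α
        set K : ℕ := r / 4 with hKdef
        have hKr : K ≤ r := by omega
        have hK4 : (K:ℝ) ≤ (r:ℝ)/4 := by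
          have h := Nat.cast_div_le (α := ℝ) (m := r) (n := 4)
          simpa using h
        have hK4' : (r:ℝ)/4 < (K:ℝ) + 1 := by
          have h1 : r < 4*K + 4 := by omega
          have h2 : (r:ℝ) < 4*(K:ℝ) + 4 := by exact_mod_cast h1
          linarith
        have hg4 : (0:ℝ) ≤ (M/4)^α := Real.rpow_nonneg (by linarith) α
        have hA : (0:ℝ) < (4:ℝ)^α := Real.rpow_pos_of_pos (by norm_num) α
        have e2 : (4:ℝ)^(-(1+α)) = (4 * (4:ℝ)^α)⁻¹ := by
          rw [Real.rpow_neg (by norm_num), Real.rpow_add (by norm_num : (0:ℝ) < 4), Real.rpow_one]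
        have e1 : (M/4)^α = M^α / (4:ℝ)^α := Real.div_rpow hM0.le (by norm_num) α
        have harith : ∀ S' : ℝ, ((K:ℝ)+1) * (M/4)^α ≤ S' → clow * (M^α * (r:ℝ)) ≤ S' := by
          intro S' hS'
          rw [e1] at hS'
          have h1 : clow ≤ (4 * (4:ℝ)^α)⁻¹ := by rw [← e2]; exact min_le_right _ _
          have h3 : clow * (M^α * (r:ℝ)) ≤ (4 * (4:ℝ)^α)⁻¹ * (M^α * (r:ℝ)) :=
            mul_le_mul_of_nonneg_right h1 hrhox_nn
          have h4 : (4 * (4:ℝ)^α)⁻¹ * (M^α * (r:ℝ)) = (r:ℝ)/4 * (M^α / (4:ℝ)^α) := by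
            field_simp
          have h5 : (r:ℝ)/4 * (M^α / (4:ℝ)^α) ≤ ((K:ℝ)+1) * (M^α / (4:ℝ)^α) :=
            mul_le_mul_of_nonneg_right hK4'.le (by positivity)
          linarith
        rcases le_or_gt r (2 * linf x) with hbig | hsmall
        · -- x-side selection
          have hK : K ≤ linf (z m - z 0) := by
            rw [hz0, hzm, hyx]
            exact hKr
          have hgc : ∀ c : Fin d → ℤ, linf (c - z 0) ≤ K → (M/4)^α ≤ nu α c := by
            intro c hc
            rw [hz0] at hc
            refine le_nu_of_nonneg hpos.le (by linarith) ?_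
            have h1 : linf x ≤ linf (x - c) + linf c := linf_le_linf_sub_add x c
            have h2 : linf (x - c) = linf (c - x) := linf_sub_comm _ _
            have h3 : linf x ≤ K + linf c := by omega
            have h3R : ((linf x:ℕ):ℝ) ≤ (K:ℝ) + (linf c:ℝ) := by exact_mod_cast h3
            have hbigR : (r:ℝ) ≤ 2 * ((linf x:ℕ):ℝ) := by exact_mod_cast hbig
            have hMle : M ≤ 2 * ((linf x:ℕ):ℝ) := max_le (by linarith) (by exact_mod_cast hbig)
            have hfin : M/4 ≤ (linf c:ℝ) := by linarith
            push_cast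
            exact le_trans hfin (le_max_left _ _)
          exact harith _ (sum_nu_ge hz hK hg4 hgc)
        · -- y-side selection via reversed path
          set z' : ℕ → Fin d → ℤ := fun i => z (m - i) with hz'def
          have hz'path : IsPath z' m := by
            intro i hi
            obtain ⟨j, hj1, hj2⟩ : ∃ j, m - (i+1) = j ∧ m - i = j + 1 :=
              ⟨m - i - 1, by omega, by omega⟩
            show l1 (z (m - (i+1)) - z (m - i)) = 1
            rw [hj1, hj2]
            have hswap : l1 (z j - z (j+1)) = l1 (z (j+1) - z j) := by
              unfold l1
              refine Finset.sum_congr rfl fun k _ => ?_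
              simp only [Pi.sub_apply]
              omega
            rw [hswap]
            exact hz j (by omega)
          have hz'0 : z' 0 = y := by simp only [hz'def, Nat.sub_zero, hzm]
          have hz'm : z' m = x := by simp only [hz'def, Nat.sub_self, hz0]
          have hsum : ∑ i ∈ Finset.range (m+1), nu α (z' i)
              = ∑ i ∈ Finset.range (m+1), nu α (z i) :=
            Finset.sum_range_reflect (fun i => nu α (z i)) (m+1)
          have hK : K ≤ linf (z' m - z' 0) := by
            rw [hz'0, hz'm, ← hrdef]
            exact hKr
          have hgc : ∀ c : Fin d → ℤ, linf (c - z' 0) ≤ K → (M/4)^α ≤ nu α c := by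
            intro c hc
            rw [hz'0] at hc
            refine le_nu_of_nonneg hpos.le (by linarith) ?_
            have h1 : linf (x - y) ≤ linf x + linf y := linf_sub_le_add' x y
            have h2 : linf y ≤ linf (y - c) + linf c := linf_le_linf_sub_add y c
            have h3 : linf (y - c) = linf (c - y) := linf_sub_comm _ _
            rw [← hrdef] at h1
            have h4 : r ≤ linf x + K + linf c := by omega
            have h4R : (r:ℝ) ≤ ((linf x:ℕ):ℝ) + (K:ℝ) + (linf c:ℝ) := by exact_mod_cast h4
            have hsmallR : 2 * ((linf x:ℕ):ℝ) < (r:ℝ) := by exact_mod_cast hsmall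
            have hMeq : M ≤ (r:ℝ) := max_le (by linarith) le_rfl
            have hfin : M/4 ≤ (linf c:ℝ) := by linarith
            push_cast
            exact le_trans hfin (le_max_left _ _)
          have happ := sum_nu_ge hz'path hK hg4 hgc
          rw [hsum] at happ
          exact harith _ happ
    calc min clow Cup⁻¹ * rhox α x ((r:ℕ):ℝ)
        ≤ clow * (M ^ α * (r:ℝ)) := by
          rw [hrx]
          exact mul_le_mul_of_nonneg_right (min_le_left _ _) hrhox_nn
      _ ≤ rho α x y := hmain
  · -- UPPER BOUND
    set m0 : ℕ := l1 (y - x) with hm0def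
    have hm0d : m0 ≤ d * r := by
      have := l1_le_linf (y - x)
      rw [hyx] at this
      exact this
    have hm0R : ((m0:ℕ):ℝ) + 1 ≤ 2*(d:ℝ)*(r:ℝ) := by
      have h1 : ((m0:ℕ):ℝ) ≤ (d:ℝ)*(r:ℝ) := by exact_mod_cast hm0d
      have h2 : (1:ℝ) ≤ (d:ℝ)*(r:ℝ) := by
        have := mul_le_mul hd1 hr1R zero_le_one (by linarith : (0:ℝ) ≤ (d:ℝ))
        linarith
      linarith
    have hub : rho α x y ≤ Cup * (M^α * (r:ℝ)) := by
      rw [rho, if_neg hxy]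
      refine le_trans (csInf_le hbdd hmem) ?_
      rcases le_or_gt 0 α with hge | hlt
      · -- α ≥ 0 : crude bound
        have hptbd : ∀ t ∈ Finset.range (m0+1), nu α (pathZ x y t) ≤ (2*M)^α := by
          intro t _
          refine nu_le_of_nonneg hge ?_
          have h1 : linf (pathZ x y t) ≤ linf x + linf (y - x) := linf_pathZ_le t
          rw [hyx] at h1
          have h1R : (linf (pathZ x y t):ℝ) ≤ ((linf x:ℕ):ℝ) + (r:ℝ) := by exact_mod_cast h1
          push_cast
          refine max_le (by linarith) (by linarith)
        have hsum1 : ∑ t ∈ Finset.range (m0+1), nu α (pathZ x y t)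
            ≤ (((m0:ℕ):ℝ)+1) * (2*M)^α := by
          have h := Finset.sum_le_card_nsmul (Finset.range (m0+1)) _ _ hptbd
          rw [Finset.card_range, nsmul_eq_mul] at h
          push_cast at h ⊢
          linarith
        have h2Mnn : (0:ℝ) ≤ (2*M)^α := Real.rpow_nonneg (by linarith) α
        have hsum2 : (((m0:ℕ):ℝ)+1) * (2*M)^α ≤ 2*(d:ℝ)*(r:ℝ) * (2*M)^α :=
          mul_le_mul_of_nonneg_right hm0R h2Mnn
        have hsplit : (2*M)^α = 2^α * M^α := Real.mul_rpow two_pos.le hM0.le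
        have e : (2:ℝ)^(1+α) = 2 * 2^α := by
          rw [Real.rpow_add two_pos, Real.rpow_one]
        have heq : 2*(d:ℝ)*(r:ℝ) * (2^α * M^α) = ((2:ℝ)^(1+α) * d) * (M^α * (r:ℝ)) := by
          rw [e]; ring
        have hrest : 0 ≤ (2:ℝ)^(1-α) * d * (5 + 6/(1+α)) := by
          apply mul_nonneg (by positivity)
          linarith
        rw [hsplit] at hsum1 hsum2
        rw [heq] at hsum2
        have hfin : ((2:ℝ)^(1+α) * (d:ℝ))*(M^α*(r:ℝ)) ≤ Cup*(M^α*(r:ℝ)) := by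
          rw [hCupdef, add_mul]
          have := mul_nonneg hrest hrhox_nn
          linarith
        linarith
      · -- α < 0
        rcases le_or_gt (2*r) (linf x) with hbig | hsmall
        · -- far regime
          have hbigR : 2*(r:ℝ) ≤ ((linf x:ℕ):ℝ) := by exact_mod_cast hbig
          have hMeqx : M ≤ ((linf x:ℕ):ℝ) := max_le le_rfl (by linarith)
          have hptbd : ∀ t ∈ Finset.range (m0+1), nu α (pathZ x y t) ≤ (M/2)^α := by
            intro t _
            refine nu_le_of_nonpos hlt.le (by linarith) ?_
            have h1 : linf x ≤ linf (pathZ x y t) + linf (y - x) := linf_le_pathZ hd t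
            rw [hyx] at h1
            have h1R : ((linf x:ℕ):ℝ) ≤ (linf (pathZ x y t):ℝ) + (r:ℝ) := by exact_mod_cast h1
            have hfin : M/2 ≤ (linf (pathZ x y t):ℝ) := by linarith
            push_cast
            exact le_trans hfin (le_max_left _ _)
          have hM2nn : (0:ℝ) ≤ (M/2)^α := Real.rpow_nonneg (by linarith) α
          have hsum1 : ∑ t ∈ Finset.range (m0+1), nu α (pathZ x y t)
              ≤ (((m0:ℕ):ℝ)+1) * (M/2)^α := by
            have h := Finset.sum_le_card_nsmul (Finset.range (m0+1)) _ _ hptbd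
            rw [Finset.card_range, nsmul_eq_mul] at h
            push_cast at h ⊢
            linarith
          have hsum2 : (((m0:ℕ):ℝ)+1) * (M/2)^α ≤ 2*(d:ℝ)*(r:ℝ) * (M/2)^α :=
            mul_le_mul_of_nonneg_right hm0R hM2nn
          have e1 : (M/2)^α = M^α / 2^α := Real.div_rpow hM0.le two_pos.le α
          have e2 : (2:ℝ)^(1-α) * 2^α = 2 := by
            rw [← Real.rpow_add two_pos]
            norm_num
          have key : 2*(d:ℝ)*(r:ℝ) * (M^α/2^α) = ((2:ℝ)^(1-α)*(d:ℝ)) * (M^α*(r:ℝ)) := by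
            field_simp
            linear_combination -e2
          have hCup_ge : ((2:ℝ)^(1-α)*(d:ℝ)) * (M^α*(r:ℝ)) ≤ Cup * (M^α*(r:ℝ)) := by
            apply mul_le_mul_of_nonneg_right ?_ hrhox_nn
            rw [hCupdef]
            have h1 : (2:ℝ)^(1-α)*(d:ℝ) ≤ (2:ℝ)^(1-α)*(d:ℝ)*(5+6/(1+α)) :=
              le_mul_of_one_le_right (by positivity) hfac
            have h2 : (0:ℝ) < (2:ℝ)^(1+α)*(d:ℝ) := mul_pos h2pa (lt_of_lt_of_le one_pos hd1)
            linarith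
          rw [e1] at hsum1 hsum2
          linarith
        · -- near regime : fine leg estimate
          set S1 : ℕ := linf x + r with hS1def
          set H : ℝ := ∑ u ∈ Finset.range (S1+1), ((max u 1 : ℕ) : ℝ) ^ α with hHdef
          have hHnn : 0 ≤ H := Finset.sum_nonneg fun u _ => Real.rpow_nonneg (Nat.cast_nonneg _) α
          have hlegs : ∑ t ∈ Finset.range m0, nu α (pathZ x y t) ≤ (d:ℝ) * (2 * H) := by
            have hrw : m0 = Nseq x y d := by rw [hm0def, Nseq_d]
            rw [hrw, sum_range_Nseq]
            have hbd : ∀ j ∈ Finset.range d,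
                ∑ t ∈ Finset.Ico (Nseq x y j) (Nseq x y (j+1)), nu α (pathZ x y t) ≤ 2 * H := by
              intro j hj
              rw [Finset.mem_range] at hj
              exact leg_sum_le hlt.le j hj (by rw [hyx, hS1def])
            have h := Finset.sum_le_card_nsmul (Finset.range d) _ _ hbd
            rw [Finset.card_range, nsmul_eq_mul] at h
            exact h
          have hnuy : nu α (pathZ x y m0) ≤ 1 := by
            rw [hm0def, pathZ_last]
            exact Real.rpow_le_one_of_one_le_of_nonpos (one_le_maxcast y) hlt.le
          have htot : ∑ t ∈ Finset.range (m0+1), nu α (pathZ x y t) ≤ (d:ℝ) * (2*H) + 1 := by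
            rw [Finset.sum_range_succ]
            linarith
          have hHle : H ≤ 2 + ((S1:ℕ):ℝ)^(1+α)/(1+α) := harmonic_le hα hlt.le S1
          have hS1le : ((S1:ℕ):ℝ) ≤ 3*(r:ℝ) := by
            have hsmallR : ((linf x:ℕ):ℝ) < 2*(r:ℝ) := by exact_mod_cast hsmall
            rw [hS1def]
            push_cast
            linarith
          have hS1p : ((S1:ℕ):ℝ)^(1+α) ≤ (3*(r:ℝ))^(1+α) :=
            Real.rpow_le_rpow (Nat.cast_nonneg _) hS1le hp0.le
          have h3p : ((3:ℝ)*(r:ℝ))^(1+α) = (3:ℝ)^(1+α) * (r:ℝ)^(1+α) :=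
            Real.mul_rpow (by norm_num) (Nat.cast_nonneg _)
          have h3le : (3:ℝ)^(1+α) ≤ 3 := by
            calc (3:ℝ)^(1+α) ≤ (3:ℝ)^(1:ℝ) :=
                  Real.rpow_le_rpow_of_exponent_le (by norm_num) (by linarith)
              _ = 3 := Real.rpow_one 3
          have hrpnn : (0:ℝ) ≤ (r:ℝ)^(1+α) := Real.rpow_nonneg hr0R.le _
          have hrp1 : (1:ℝ) ≤ (r:ℝ)^(1+α) := by
            calc (1:ℝ) = (1:ℝ)^(1+α) := (Real.one_rpow _).symm
              _ ≤ (r:ℝ)^(1+α) := Real.rpow_le_rpow zero_le_one hr1R hp0.le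
          have hS1p' : ((S1:ℕ):ℝ)^(1+α) ≤ 3 * (r:ℝ)^(1+α) := by
            calc ((S1:ℕ):ℝ)^(1+α) ≤ (3:ℝ)^(1+α) * (r:ℝ)^(1+α) := by rw [← h3p]; exact hS1p
              _ ≤ 3 * (r:ℝ)^(1+α) := mul_le_mul_of_nonneg_right h3le hrpnn
          have hF : (0:ℝ) ≤ 5 + 6/(1+α) := by linarith
          have hstep1 : H ≤ 2 + 3*(r:ℝ)^(1+α)/(1+α) := by
            refine le_trans hHle ?_
            have hdiv : ((S1:ℕ):ℝ)^(1+α)/(1+α) ≤ 3*(r:ℝ)^(1+α)/(1+α) := by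
              gcongr
            linarith
          have hH2 : 2*H ≤ 4 + 6*(r:ℝ)^(1+α)/(1+α) := by
            rw [show (4:ℝ) + 6*(r:ℝ)^(1+α)/(1+α) = 2*(2 + 3*(r:ℝ)^(1+α)/(1+α)) by ring]
            linarith
          have hdP : (1:ℝ) ≤ (d:ℝ)*(r:ℝ)^(1+α) := by
            have := mul_le_mul hd1 hrp1 zero_le_one (by linarith : (0:ℝ) ≤ (d:ℝ))
            linarith
          have htot2 : (d:ℝ)*(2*H) + 1 ≤ (d:ℝ)*(r:ℝ)^(1+α)*(5 + 6/(1+α)) := by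
            have hml := mul_le_mul_of_nonneg_left hH2 (by linarith : (0:ℝ) ≤ (d:ℝ))
            have e8 : (d:ℝ)*(4 + 6*(r:ℝ)^(1+α)/(1+α))
                = 4*(d:ℝ) + (d:ℝ)*(r:ℝ)^(1+α)*(6/(1+α)) := by ring
            have e9 : (d:ℝ)*(r:ℝ)^(1+α)*(5 + 6/(1+α))
                = 5*((d:ℝ)*(r:ℝ)^(1+α)) + (d:ℝ)*(r:ℝ)^(1+α)*(6/(1+α)) := by ring
            have hd_le : (d:ℝ) ≤ (d:ℝ)*(r:ℝ)^(1+α) :=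
              le_mul_of_one_le_right (by linarith) hrp1
            linarith
          have hrap : (r:ℝ)^(1+α) = (r:ℝ) * (r:ℝ)^α := by
            rw [Real.rpow_add hr0R, Real.rpow_one]
          have hM2r : M ≤ 2*(r:ℝ) := by
            have hsmallR : ((linf x:ℕ):ℝ) < 2*(r:ℝ) := by exact_mod_cast hsmall
            exact max_le (by linarith) (by linarith)
          have h2rα : (2*(r:ℝ))^α ≤ M^α := Real.rpow_le_rpow_of_nonpos hM0 hM2r hlt.le
          have h2rsplit : (2*(r:ℝ))^α = 2^α * (r:ℝ)^α := Real.mul_rpow two_pos.le hr0R.le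
          have hrαM : (r:ℝ)^α ≤ 2^(-α) * M^α := by
            have h3 : (2:ℝ)^(-α) * 2^α = 1 := by
              rw [← Real.rpow_add two_pos]
              norm_num
            have h4 := mul_le_mul_of_nonneg_left h2rα h2na.le
            rw [h2rsplit, ← mul_assoc, h3, one_mul] at h4
            exact h4
          have step1 : (d:ℝ)*(r:ℝ)^(1+α)*(5+6/(1+α))
              ≤ 2^(-α)*(d:ℝ)*(5+6/(1+α))*(M^α*(r:ℝ)) := by
            rw [hrap]
            have hc : (0:ℝ) ≤ (d:ℝ)*(5+6/(1+α))*(r:ℝ) :=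
              mul_nonneg (mul_nonneg (by linarith) hF) hr0R.le
            have h := mul_le_mul_of_nonneg_left hrαM hc
            calc (d:ℝ)*((r:ℝ)*(r:ℝ)^α)*(5+6/(1+α))
                = (d:ℝ)*(5+6/(1+α))*(r:ℝ)*((r:ℝ)^α) := by ring
              _ ≤ (d:ℝ)*(5+6/(1+α))*(r:ℝ)*(2^(-α)*M^α) := h
              _ = 2^(-α)*(d:ℝ)*(5+6/(1+α))*(M^α*(r:ℝ)) := by ring
          have step2 : 2^(-α)*(d:ℝ)*(5+6/(1+α))*(M^α*(r:ℝ)) ≤ Cup*(M^α*(r:ℝ)) := by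
            apply mul_le_mul_of_nonneg_right ?_ hrhox_nn
            rw [hCupdef]
            have e10 : (2:ℝ)^(1-α) = 2*2^(-α) := by
              rw [show (1:ℝ)-α = 1 + -α by ring, Real.rpow_add two_pos, Real.rpow_one]
            have hdFnn : (0:ℝ) ≤ 2^(-α)*(d:ℝ)*(5+6/(1+α)) :=
              mul_nonneg (mul_nonneg h2na.le (by linarith)) hF
            have e11 : (2:ℝ)^(1-α)*(d:ℝ)*(5+6/(1+α)) = 2*(2^(-α)*(d:ℝ)*(5+6/(1+α))) := by
              rw [e10]; ring
            have h2 : (0:ℝ) < (2:ℝ)^(1+α)*(d:ℝ) := mul_pos h2pa (lt_of_lt_of_le one_pos hd1)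
            linarith
          exact le_trans htot (le_trans htot2 (le_trans step1 step2))
    have hcc : Cup ≤ (min clow Cup⁻¹)⁻¹ := by
      have h1 : min clow Cup⁻¹ ≤ Cup⁻¹ := min_le_right _ _
      have h2 : (0:ℝ) < min clow Cup⁻¹ := lt_min hclow_pos (inv_pos.mpr hCup_pos)
      have h3 := inv_anti₀ h2 h1
      rwa [inv_inv] at h3
    calc rho α x y ≤ Cup * (M^α * (r:ℝ)) := hub
      _ ≤ (min clow Cup⁻¹)⁻¹ * rhox α x ((r:ℕ):ℝ) := by
          rw [hrx]
          exact mul_le_mul_of_nonneg_right hcc hrhox_nn
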